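/- If M ≈_P N and M →*_P fr.t₁.···.tₖ with this reduct final and fr a name not in the domain of P, then N →*_P fr.u₁.···.uₖ for some terms u₁,…,uₖ with the same head fr and same length k, and this reduct is final. -/

import Mathlib

/-- Terms of continuation calculus: names (coded as naturals) and dot. -/
inductive Tm where
  | name : ℕ → Tm
  | dot : Tm → Tm → Tm
deriving DecidableEq

/-- Right-hand sides of rules: names, variables (de Bruijn-style indices
into the left-hand side's variable list), and dot. -/
inductive Rhs where
  | name : ℕ → Rhs
  | var : ℕ → Rhs
  | dot : Rhs → Rhs → Rhs
deriving DecidableEq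

/-- A rule `n.x₁.⋯.xₖ → r`: head name, arity `k`, and right-hand side. -/
structure Rule where
  head : ℕ
  arity : ℕ
  rhs : Rhs
deriving DecidableEq

/-- A program is a finite set of rules. -/
abbrev Program := Finset Rule

/-- Variables occurring in a right-hand side. -/
def Rhs.HasVar : Rhs → ℕ → Prop
  | .name _, _ => False
  | .var w, v => w = v
  | .dot a b, v => a.HasVar v ∨ b.HasVar v

/-- Well-formedness: every variable of a right-hand side occurs in the
left-hand side, and there is at most one rule per head name. -/
def Program.Wf (P : Program) : Prop :=
  (∀ r ∈ P, ∀ v, r.rhs.HasVar v → v < r.arity) ∧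
  (∀ r₁ ∈ P, ∀ r₂ ∈ P, r₁.head = r₂.head → r₁ = r₂)

/-- `n.t₁.⋯.tₖ` : left-associated application of a term to a list of terms. -/
def Tm.apps : Tm → List Tm → Tm
  | h, [] => h
  | h, t :: ts => Tm.apps (h.dot t) ts

/-- Instantiation of a right-hand side with the terms matched by the
left-hand side variables; fails if some variable is out of range. -/
def Rhs.inst (ts : List Tm) : Rhs → Option Tm
  | .name n => some (.name n)
  | .var v => ts[v]?
  | .dot a b => do pure (.dot (← a.inst ts) (← b.inst ts))

/-- One-step evaluation `M →_P N`. -/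
def Step (P : Program) (M N : Tm) : Prop :=
  ∃ r ∈ P, ∃ ts : List Tm, ts.length = r.arity ∧
    M = Tm.apps (.name r.head) ts ∧ r.rhs.inst ts = some N

/-- Multi-step evaluation `M →*_P N`. -/
def Steps (P : Program) : Tm → Tm → Prop := Relation.ReflTransGen (Step P)

/-- `M` is final: it has no successor. -/
def Final (P : Program) (M : Tm) : Prop := ¬ ∃ N, Step P M N

/-- `M` terminates: it evaluates to a final term. -/
def Terminates (P : Program) (M : Tm) : Prop := ∃ N, Steps P M N ∧ Final P N

/-- The name `m` occurs in a term. -/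
def Tm.HasName (m : ℕ) : Tm → Prop
  | .name n => n = m
  | .dot a b => a.HasName m ∨ b.HasName m

/-- The name `m` occurs in a right-hand side. -/
def Rhs.HasName (m : ℕ) : Rhs → Prop
  | .name n => n = m
  | .var _ => False
  | .dot a b => a.HasName m ∨ b.HasName m

/-- The name `m` occurs (is mentioned) in a program. -/
def Program.HasName (P : Program) (m : ℕ) : Prop :=
  ∃ r ∈ P, r.head = m ∨ r.rhs.HasName m

/-- The name `m` is defined by the program (is the head of some rule). -/
def Program.Defines (P : Program) (m : ℕ) : Prop :=
  ∃ r ∈ P, r.head = m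

/-- Substitution of a term for a name, `M[fr := t]`. -/
def Tm.subName (m : ℕ) (t : Tm) : Tm → Tm
  | .name n => if n = m then t else .name n
  | .dot a b => .dot (Tm.subName m t a) (Tm.subName m t b)

/-- Common reduct relation `M =_P N`. -/
def CommonRed (P : Program) (M N : Tm) : Prop :=
  ∃ t, Steps P M t ∧ Steps P N t

/-- Observational equivalence `M ≈_P N`. -/
def ObsEq (P : Program) (M N : Tm) : Prop :=
  ∀ P' : Program, P'.Wf → P ⊆ P' →
    ∀ X : Tm, (Terminates P' (X.dot M) ↔ Terminates P' (X.dot N))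

/-- Renaming of names in a term. -/
def Tm.rename (f : ℕ → ℕ) : Tm → Tm
  | .name n => .name (f n)
  | .dot a b => .dot (a.rename f) (b.rename f)

/-- Renaming of names in a right-hand side. -/
def Rhs.rename (f : ℕ → ℕ) : Rhs → Rhs
  | .name n => .name (f n)
  | .var v => .var v
  | .dot a b => .dot (a.rename f) (b.rename f)

/-- Renaming of names in a rule. -/
def Rule.rename (f : ℕ → ℕ) (r : Rule) : Rule :=
  ⟨f r.head, r.arity, r.rhs.rename f⟩

/-- Renaming of names in a program. -/
def Program.rename (f : ℕ → ℕ) (P : Program) : Program :=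
  P.image (Rule.rename f)

/-- The fresh substitution `[n⃗ := m⃗]` as a function on names. -/
def renFun (ns ms : List ℕ) (n : ℕ) : ℕ :=
  ((ns.zip ms).lookup n).getD n

/-- `M` has arity `k` under `P`: `M = n.q₁.⋯.qᵢ` where `n` has a rule of
arity `i + k`. -/
def Tm.ArityIs (P : Program) (M : Tm) (k : ℕ) : Prop :=
  ∃ r ∈ P, ∃ ts : List Tm, M = Tm.apps (.name r.head) ts ∧ ts.length + k = r.arity

/-! ### Auxiliary machinery -/

def Tm.headOf : Tm → ℕ
  | .name n => n
  | .dot a _ => a.headOf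

def Tm.argsOf : Tm → List Tm
  | .name _ => []
  | .dot a b => a.argsOf ++ [b]

lemma headOf_apps (h : Tm) (ls : List Tm) : (Tm.apps h ls).headOf = h.headOf := by
  induction ls generalizing h with
  | nil => rfl
  | cons t rest ih => simpa [Tm.apps, Tm.headOf] using ih (h.dot t)

lemma argsOf_apps (h : Tm) (ls : List Tm) : (Tm.apps h ls).argsOf = h.argsOf ++ ls := by
  induction ls generalizing h with
  | nil => simp [Tm.apps]
  | cons t rest ih => simp [Tm.apps, ih (h.dot t), Tm.argsOf]

lemma apps_name_inj {n n' : ℕ} {ls ls' : List Tm}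
    (h : Tm.apps (.name n) ls = Tm.apps (.name n') ls') : n = n' ∧ ls = ls' := by
  constructor
  · have := congrArg Tm.headOf h; simpa [headOf_apps, Tm.headOf] using this
  · have := congrArg Tm.argsOf h; simpa [argsOf_apps, Tm.argsOf] using this

lemma tm_decomp (T : Tm) : T = Tm.apps (.name T.headOf) T.argsOf := by
  induction T with
  | name n => rfl
  | dot a b iha ihb =>
      show a.dot b = Tm.apps (.name a.headOf) (a.argsOf ++ [b])
      have : ∀ (h : Tm) (ls : List Tm) (b : Tm),
          Tm.apps h (ls ++ [b]) = (Tm.apps h ls).dot b := by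
        intro h ls; induction ls generalizing h with
        | nil => intro b; rfl
        | cons t rest ih => intro b; simpa [Tm.apps] using ih (h.dot t) b
      rw [this, ← iha]

lemma hasName_headOf (T : Tm) : T.HasName T.headOf := by
  induction T with
  | name n => simp [Tm.HasName, Tm.headOf]
  | dot a b iha ihb => exact Or.inl iha

lemma hasName_apps {m : ℕ} {h : Tm} {ls : List Tm} :
    (Tm.apps h ls).HasName m ↔ h.HasName m ∨ ∃ t ∈ ls, t.HasName m := by
  induction ls generalizing h with
  | nil => simp [Tm.apps]
  | cons t rest ih =>
      simp only [Tm.apps, ih, Tm.HasName, List.mem_cons]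
      constructor
      · rintro ((h1 | h1) | ⟨u, hu, h2⟩)
        · exact Or.inl h1
        · exact Or.inr ⟨t, Or.inl rfl, h1⟩
        · exact Or.inr ⟨u, Or.inr hu, h2⟩
      · rintro (h1 | ⟨u, (rfl | hu), h2⟩)
        · exact Or.inl (Or.inl h1)
        · exact Or.inl (Or.inr h2)
        · exact Or.inr ⟨u, hu, h2⟩

lemma inst_hasName {ts : List Tm} {r : Rhs} {U : Tm} (h : r.inst ts = some U) {m : ℕ}
    (hm : U.HasName m) : r.HasName m ∨ ∃ t ∈ ts, t.HasName m := by
  induction r generalizing U with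
  | name n =>
      simp [Rhs.inst] at h; subst h; exact Or.inl hm
  | var v =>
      refine Or.inr ⟨U, ?_, hm⟩
      exact List.mem_of_getElem? h
  | dot a b iha ihb =>
      simp only [Rhs.inst, Option.bind_eq_bind, Option.bind_eq_some_iff, Option.pure_def,
        Option.some.injEq] at h
      obtain ⟨ta, hta, tb, htb, rfl⟩ := h
      rcases hm with hm | hm
      · rcases iha hta hm with h1 | h1
        · exact Or.inl (Or.inl h1)
        · exact Or.inr h1
      · rcases ihb htb hm with h1 | h1
        · exact Or.inl (Or.inr h1)
        · exact Or.inr h1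

lemma step_elim {P : Program} {T U : Tm} (h : Step P T U) :
    ∃ r ∈ P, r.head = T.headOf ∧ T.argsOf.length = r.arity ∧
      r.rhs.inst T.argsOf = some U := by
  obtain ⟨r, hr, ls, hlen, hTeq, hinst⟩ := h
  have hd : T.headOf = r.head := by rw [hTeq, headOf_apps]; rfl
  have ha : T.argsOf = ls := by rw [hTeq, argsOf_apps]; rfl
  exact ⟨r, hr, hd.symm, by rw [ha]; exact hlen, by rw [ha]; exact hinst⟩

lemma step_det {P : Program} {T U U' : Tm} (hP : P.Wf) (h1 : Step P T U)
    (h2 : Step P T U') : U = U' := by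
  obtain ⟨r, hr, hh, -, hi⟩ := step_elim h1
  obtain ⟨r', hr', hh', -, hi'⟩ := step_elim h2
  have : r = r' := hP.2 r hr r' hr' (by rw [hh, hh'])
  subst this
  rw [hi] at hi'; exact Option.some.inj hi'

lemma step_mono {P P' : Program} (h : P ⊆ P') {T U : Tm} (hs : Step P T U) :
    Step P' T U := by
  obtain ⟨r, hr, ls, h1, h2, h3⟩ := hs
  exact ⟨r, h hr, ls, h1, h2, h3⟩

lemma steps_mono {P P' : Program} (h : P ⊆ P') {T U : Tm} (hs : Steps P T U) :
    Steps P' T U :=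
  Relation.ReflTransGen.mono (fun _ _ => step_mono h) _ _ hs

lemma final_mono {P P' : Program} (h : P ⊆ P') {T : Tm} (hf : Final P' T) :
    Final P T := fun ⟨U, hU⟩ => hf ⟨U, step_mono h hU⟩

lemma final_of_head {P : Program} {T : Tm} (h : ¬ P.Defines T.headOf) : Final P T := by
  rintro ⟨U, hU⟩
  obtain ⟨r, hr, hh, -, -⟩ := step_elim hU
  exact h ⟨r, hr, hh⟩

lemma term_of_step {P : Program} (hP : P.Wf) {T U : Tm} (h : Step P T U)
    (ht : Terminates P T) : Terminates P U := by
  obtain ⟨V, hTV, hV⟩ := ht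
  rcases Relation.ReflTransGen.cases_head hTV with rfl | ⟨W, hTW, hWV⟩
  · exact absurd ⟨U, h⟩ hV
  · have : U = W := step_det hP h hTW
    exact ⟨V, this ▸ hWV, hV⟩

lemma term_of_steps {P : Program} (hP : P.Wf) {T U : Tm} (h : Steps P T U)
    (ht : Terminates P T) : Terminates P U := by
  induction h with
  | refl => exact ht
  | tail _ hstep ih => exact term_of_step hP hstep ih

lemma loop_reach {P : Program} (hP : P.Wf) {T : Tm} (hl : Step P T T) {V : Tm}
    (h : Steps P T V) : V = T := by
  induction h with
  | refl => rfl
  | tail _ hstep ih =>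
      rw [ih] at hstep
      exact step_det hP hstep hl

lemma loop_not_term {P : Program} (hP : P.Wf) {T : Tm} (hl : Step P T T) :
    ¬ Terminates P T := by
  rintro ⟨V, h, hV⟩
  rw [loop_reach hP hl h] at hV
  exact hV ⟨T, hl⟩

lemma step_preserve_name {P : Program} {T U : Tm} {x : ℕ}
    (hx : ∀ r ∈ P, ¬ r.rhs.HasName x) (h : Step P T U) (hT : ¬ T.HasName x) :
    ¬ U.HasName x := by
  obtain ⟨r, hr, ls, hlen, rfl, hinst⟩ := h
  intro hU
  rcases inst_hasName hinst hU with h1 | ⟨t, ht, h2⟩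
  · exact hx r hr h1
  · exact hT (hasName_apps.2 (Or.inr ⟨t, ht, h2⟩))

lemma steps_preserve_name {P : Program} {T V : Tm} {x : ℕ}
    (hx : ∀ r ∈ P, ¬ r.rhs.HasName x) (h : Steps P T V) (hT : ¬ T.HasName x) :
    ¬ V.HasName x := by
  induction h with
  | refl => exact hT
  | tail _ hstep ih => exact step_preserve_name hx hstep ih

lemma step_of_insert {ρ : Rule} {P : Program} {T U : Tm}
    (h : Step (insert ρ P) T U) (hT : ¬ T.HasName ρ.head) : Step P T U := by
  obtain ⟨r, hr, ls, hlen, hTeq, hinst⟩ := h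
  rcases Finset.mem_insert.1 hr with rfl | hr
  · exact absurd (hTeq ▸ hasName_apps.2 (Or.inl rfl)) hT
  · exact ⟨r, hr, ls, hlen, hTeq, hinst⟩

lemma steps_strip {ρ : Rule} {P : Program}
    (hx : ∀ r ∈ P, ¬ r.rhs.HasName ρ.head) {T V : Tm}
    (h : Steps (insert ρ P) T V) (hT : ¬ T.HasName ρ.head) :
    Steps P T V ∧ ¬ V.HasName ρ.head := by
  induction h with
  | refl => exact ⟨Relation.ReflTransGen.refl, hT⟩
  | tail _ hstep ih =>
      obtain ⟨h1, h2⟩ := ih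
      have h3 := step_of_insert hstep h2
      exact ⟨h1.tail h3, step_preserve_name hx h3 h2⟩

def tmB : Tm → ℕ
  | .name n => n + 1
  | .dot a b => max (tmB a) (tmB b)

lemma tmB_lt {T : Tm} {m : ℕ} (h : T.HasName m) : m < tmB T := by
  induction T with
  | name n => simp only [Tm.HasName] at h; simp [tmB]; omega
  | dot a b iha ihb =>
    simp only [tmB]
    rcases h with h | h
    · exact lt_of_lt_of_le (iha h) (le_max_left _ _)
    · exact lt_of_lt_of_le (ihb h) (le_max_right _ _)

def rhsB : Rhs → ℕ
  | .name n => n + 1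
  | .var _ => 0
  | .dot a b => max (rhsB a) (rhsB b)

lemma rhsB_lt {r : Rhs} {m : ℕ} (h : r.HasName m) : m < rhsB r := by
  induction r with
  | name n => simp only [Rhs.HasName] at h; simp [rhsB]; omega
  | var v => exact absurd h (by simp [Rhs.HasName])
  | dot a b iha ihb =>
    simp only [rhsB]
    rcases h with h | h
    · exact lt_of_lt_of_le (iha h) (le_max_left _ _)
    · exact lt_of_lt_of_le (ihb h) (le_max_right _ _)

def progB (P : Program) : ℕ := P.sup fun r => max (r.head + 1) (rhsB r.rhs)

lemma head_lt_progB {P : Program} {r : Rule} (hr : r ∈ P) : r.head < progB P :=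
  lt_of_lt_of_le (Nat.lt_succ_self _)
    (le_trans (le_max_left _ _) (Finset.le_sup (f := fun r => max (r.head + 1) (rhsB r.rhs)) hr))

lemma rhs_lt_progB {P : Program} {r : Rule} (hr : r ∈ P) {m : ℕ}
    (h : r.rhs.HasName m) : m < progB P :=
  lt_of_lt_of_le (rhsB_lt h)
    (le_trans (le_max_right _ _) (Finset.le_sup (f := fun r => max (r.head + 1) (rhsB r.rhs)) hr))
theorem obsEq_then_reaches_same_name (P : Program) (hP : P.Wf) (M N : Tm)
    (fr : ℕ) (ts : List Tm) (heq : ObsEq P M N)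
    (hred : Steps P M (Tm.apps (.name fr) ts))
    (hfin : Final P (Tm.apps (.name fr) ts)) (hfr : ¬ P.Defines fr) :
    ∃ us : List Tm, us.length = ts.length ∧
      Steps P N (Tm.apps (.name fr) us) ∧
      Final P (Tm.apps (.name fr) us) := by
  classical
  set k := ts.length with hk
  set B := max (max (tmB N) (progB P)) (fr + 1) with hB
  have hNB : tmB N ≤ B := le_trans (le_max_left _ _) (le_max_left _ _)
  have hPB : progB P ≤ B := le_trans (le_max_right _ _) (le_max_left _ _)
  have hfrB : fr < B := lt_of_lt_of_le (Nat.lt_succ_self fr) (le_max_right _ _)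
  have hNx : ¬ N.HasName B := fun h => by have := tmB_lt h; omega
  have hNz : ¬ N.HasName (B + 1) := fun h => by have := tmB_lt h; omega
  have hheadP : ∀ r ∈ P, r.head < B := fun r hr => lt_of_lt_of_le (head_lt_progB hr) hPB
  have hrhsP : ∀ m, B ≤ m → ∀ r ∈ P, ¬ r.rhs.HasName m :=
    fun m hm r hr h => by have := rhs_lt_progB hr h; omega
  -- the three fresh rules
  set xr : Rule := ⟨B, 1, .var 0⟩ with hxr
  set fruler : Rule := ⟨fr, k, .name (B + 1)⟩ with hfruler
  set zr : Rule := ⟨B + 1, 0, .name (B + 1)⟩ with hzr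
  set P₁ : Program := insert xr P with hP₁
  set P₂ : Program := insert xr (insert fruler (insert zr P)) with hP₂
  have hsub₁ : P ⊆ P₁ := Finset.subset_insert _ _
  have hsub₂ : P ⊆ P₂ := by
    intro r hr
    exact Finset.mem_insert_of_mem (Finset.mem_insert_of_mem (Finset.mem_insert_of_mem hr))
  have hfrNotP : ∀ r ∈ P, r.head ≠ fr := fun r hr h => hfr ⟨r, hr, h⟩
  have hwf₁ : P₁.Wf := by
    constructor
    · rintro r hr v hv
      rcases Finset.mem_insert.1 hr with rfl | hr
      · have h0 : (0 : ℕ) = v := hv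
        show v < 1
        omega
      · exact hP.1 r hr v hv
    · rintro r₁ h₁ r₂ h₂ hh
      rcases Finset.mem_insert.1 h₁ with rfl | h₁ <;> rcases Finset.mem_insert.1 h₂ with rfl | h₂
      · rfl
      · exact absurd hh.symm (by have := hheadP _ h₂; simp [hxr]; omega)
      · exact absurd hh (by have := hheadP _ h₁; simp [hxr]; omega)
      · exact hP.2 r₁ h₁ r₂ h₂ hh
  have hwf₂ : P₂.Wf := by
    constructor
    · rintro r hr v hv
      rcases Finset.mem_insert.1 hr with rfl | hr
      · have h0 : (0 : ℕ) = v := hv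
        show v < 1
        omega
      rcases Finset.mem_insert.1 hr with rfl | hr
      · exact absurd hv (by simp [hfruler, Rhs.HasVar])
      rcases Finset.mem_insert.1 hr with rfl | hr
      · exact absurd hv (by simp [hzr, Rhs.HasVar])
      · exact hP.1 r hr v hv
    · rintro r₁ h₁ r₂ h₂ hh
      have names : ∀ r ∈ P₂, r = xr ∨ r = fruler ∨ r = zr ∨ r ∈ P := by
        intro r hr
        rcases Finset.mem_insert.1 hr with rfl | hr
        · exact Or.inl rfl
        rcases Finset.mem_insert.1 hr with rfl | hr
        · exact Or.inr (Or.inl rfl)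
        rcases Finset.mem_insert.1 hr with rfl | hr
        · exact Or.inr (Or.inr (Or.inl rfl))
        · exact Or.inr (Or.inr (Or.inr hr))
      rcases names r₁ h₁ with rfl | rfl | rfl | hm₁ <;>
        rcases names r₂ h₂ with rfl | rfl | rfl | hm₂ <;>
        first
          | rfl
          | (exact hP.2 _ hm₁ _ hm₂ hh)
          | (exact absurd hh (by
              simp only [hxr, hfruler, hzr]
              first
                | (intro h; omega)
                | (have := hheadP _ hm₁; intro h; omega)
                | (have := hheadP _ hm₂; intro h; omega)
                | (have := hfrNotP _ hm₁; simp_all)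
                | (have := hfrNotP _ hm₂; intro h; exact this h.symm)))
  have hxmem₁ : xr ∈ P₁ := Finset.mem_insert_self _ _
  have hxmem₂ : xr ∈ P₂ := Finset.mem_insert_self _ _
  have hfrmem₂ : fruler ∈ P₂ := Finset.mem_insert_of_mem (Finset.mem_insert_self _ _)
  have hzmem₂ : zr ∈ P₂ := Finset.mem_insert_of_mem (Finset.mem_insert_of_mem (Finset.mem_insert_self _ _))
  have step_x : ∀ (Q : Program), xr ∈ Q → ∀ T : Tm, Step Q ((Tm.name B).dot T) T := by
    intro Q hQ T
    exact ⟨xr, hQ, [T], rfl, rfl, (by simp [hxr, Rhs.inst])⟩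
  -- Stage 1 : termination in P₁ gives a P-reduct V of N
  have hfin₁ : Final P₁ (Tm.apps (.name fr) ts) := by
    apply final_of_head
    rw [headOf_apps]
    rintro ⟨r, hr, hh⟩
    rcases Finset.mem_insert.1 hr with rfl | hr
    · simp only [hxr] at hh
      have : Tm.headOf (.name fr) = fr := rfl
      omega
    · exact hfr ⟨r, hr, by simpa [Tm.headOf] using hh⟩
  have hTM₁ : Terminates P₁ ((Tm.name B).dot M) :=
    ⟨Tm.apps (.name fr) ts,
      Relation.ReflTransGen.head (step_x P₁ hxmem₁ M) (steps_mono hsub₁ hred), hfin₁⟩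
  obtain ⟨V, hNV, hVfin⟩ := (heq P₁ hwf₁ hsub₁ (.name B)).1 hTM₁
  rcases Relation.ReflTransGen.cases_head hNV with rfl | ⟨W, hstep1, hWV⟩
  · exact absurd ⟨N, step_x P₁ hxmem₁ N⟩ hVfin
  have hWN : N = W := step_det hwf₁ (step_x P₁ hxmem₁ N) hstep1
  subst hWN
  have hrhsx : ∀ r ∈ P, ¬ r.rhs.HasName xr.head := hrhsP B le_rfl
  obtain ⟨hNVP, hVx⟩ := steps_strip hrhsx hWV hNx
  have hVfinP : Final P V := final_mono hsub₁ hVfin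
  have hVz : ¬ V.HasName (B + 1) :=
    steps_preserve_name (hrhsP (B + 1) (by omega)) hNVP hNz
  -- Stage 2 : the head of V is fr with the right number of arguments
  have key : V.headOf = fr ∧ V.argsOf.length = k := by
    by_contra hcon
    have hzstep : Step P₂ (.name (B + 1)) (.name (B + 1)) := ⟨zr, hzmem₂, [], rfl, rfl, rfl⟩
    have hfrstep : Step P₂ (Tm.apps (.name fr) ts) (.name (B + 1)) :=
      ⟨fruler, hfrmem₂, ts, rfl, rfl, rfl⟩
    have hntM : ¬ Terminates P₂ ((Tm.name B).dot M) := by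
      intro hterm
      have h1 := term_of_step hwf₂ (step_x P₂ hxmem₂ M) hterm
      have h2 := term_of_steps hwf₂ (steps_mono hsub₂ hred) h1
      have h3 := term_of_step hwf₂ hfrstep h2
      exact loop_not_term hwf₂ hzstep h3
    apply hntM
    apply (heq P₂ hwf₂ hsub₂ (.name B)).2
    refine ⟨V, Relation.ReflTransGen.head (step_x P₂ hxmem₂ N) (steps_mono hsub₂ hNVP), ?_⟩
    rintro ⟨U, hU⟩
    obtain ⟨r, hr, hh, hlen, hinst⟩ := step_elim hU
    have hVg : V.HasName V.headOf := hasName_headOf V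
    rcases Finset.mem_insert.1 hr with rfl | hr
    · exact hVx (hh ▸ hVg)
    rcases Finset.mem_insert.1 hr with rfl | hr
    · exact hcon ⟨hh.symm, hlen⟩
    rcases Finset.mem_insert.1 hr with rfl | hr
    · refine hVz ?_
      have hx2 := hVg
      rw [← hh] at hx2
      exact hx2
    · exact hVfinP ⟨U, ⟨r, hr, V.argsOf, hlen, (hh ▸ tm_decomp V), hinst⟩⟩
  obtain ⟨hg, hlen⟩ := key
  refine ⟨V.argsOf, hlen, ?_, ?_⟩
  · rw [← hg, ← tm_decomp V]; exact hNVP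
  · rw [← hg, ← tm_decomp V]; exact hVfinP
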